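/- Let R be a ring and R[X₁,...,X_d] a polynomial ring with its usual Z_{≥0}^d-grading. Let M = ⊕_{m ∈ Z_{≥0}^d} M_m be a graded R[X₁,...,X_d]-module and let a₁,...,a_d ∈ Rˣ. Set Y_i := X_i − a_i. Then (Y₁,...,Y_d) is a regular sequence of endomorphisms of M: for each 1 ≤ j ≤ d, the endomorphism of M / (Y₁M + ... + Y_{j−1}M) induced by Y_j is injective. -/

import Mathlib

set_option maxHeartbeats 1000000
set_option synthInstance.maxHeartbeats 1000000

open DirectSum

section StmtAux

variable {R : Type} [CommRing R] {d : ℕ}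
  {M : Type} [AddCommGroup M] [Module (MvPolynomial (Fin d) R) M]
  [Module R M]
  [DecidableEq (Fin d →₀ ℕ)]
  (ℳ : (Fin d →₀ ℕ) → Submodule R M) [DirectSum.Decomposition ℳ]
  (j : Fin d)

noncomputable def stmtPi (n : ℕ) : M →+ M :=
  AddMonoidHom.mk'
    (fun x => (decompose ℳ).symm
      (DFinsupp.filter (fun m : Fin d →₀ ℕ => m j = n) (decompose ℳ x)))
    (fun x y => by
      rw [decompose_add, DFinsupp.filter_add, decompose_symm_add])

theorem stmtPi_of_mem {m : Fin d →₀ ℕ} {z : M} (hz : z ∈ ℳ m) (n : ℕ) :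
    stmtPi ℳ j n z = if m j = n then z else 0 := by
  have h1 : decompose ℳ z = DFinsupp.single m (⟨z, hz⟩ : ℳ m) := by
    rw [decompose_of_mem ℳ hz]; rfl
  show (decompose ℳ).symm (DFinsupp.filter (fun m : Fin d →₀ ℕ => m j = n) (decompose ℳ z)) = _
  rw [h1, DFinsupp.filter_single]
  split_ifs with h
  · exact decompose_symm_of ℳ _
  · exact map_zero (decomposeAddEquiv ℳ).symm

theorem stmtPi_eq_sum [∀ m (z : ℳ m), Decidable (z ≠ 0)] (n : ℕ) (w : M) :
    stmtPi ℳ j n w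
      = ∑ m ∈ (decompose ℳ w).support, if m j = n then ((decompose ℳ w m : M)) else 0 := by
  conv_lhs => rw [← sum_support_decompose ℳ w]
  rw [map_sum]
  exact Finset.sum_congr rfl fun m _ => stmtPi_of_mem ℳ j (SetLike.coe_mem _) n

theorem stmtPi_smul (p : MvPolynomial (Fin d) R) (e : Fin d →₀ ℕ)
    (hp : ∀ (m) (z : M), z ∈ ℳ m → p • z ∈ ℳ (m + e)) (n : ℕ) (x : M) :
    stmtPi ℳ j n (p • x) = if e j ≤ n then p • stmtPi ℳ j (n - e j) x else 0 := by
  classical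
  conv_lhs => rw [show p • x = ∑ m ∈ (decompose ℳ x).support, p • (decompose ℳ x m : M) by
    rw [← Finset.smul_sum, sum_support_decompose]]
  rw [map_sum]
  have hterm : ∀ m ∈ (decompose ℳ x).support,
      stmtPi ℳ j n (p • (decompose ℳ x m : M))
        = if m j + e j = n then p • (decompose ℳ x m : M) else 0 := fun m _ => by
    rw [stmtPi_of_mem ℳ j (hp m _ (SetLike.coe_mem _)) n, Finsupp.add_apply]
  rw [Finset.sum_congr rfl hterm]
  by_cases he : e j ≤ n
  · rw [if_pos he, stmtPi_eq_sum, Finset.smul_sum]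
    refine Finset.sum_congr rfl fun m _ => ?_
    by_cases h : m j = n - e j
    · rw [if_pos (by omega), if_pos h]
    · rw [if_neg (by omega), if_neg h, smul_zero]
  · rw [if_neg he]
    exact Finset.sum_eq_zero fun m _ => by rw [if_neg (by omega)]

theorem stmtPi_total [∀ m (z : ℳ m), Decidable (z ≠ 0)] (x : M) :
    ∑ n ∈ (decompose ℳ x).support.image (fun m => m j), stmtPi ℳ j n x = x := by
  classical
  rw [Finset.sum_congr rfl (fun n _ => stmtPi_eq_sum ℳ j n x), Finset.sum_comm]
  calc ∑ m ∈ (decompose ℳ x).support,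
        ∑ n ∈ (decompose ℳ x).support.image (fun m => m j),
          (if m j = n then ((decompose ℳ x m : M)) else 0)
      = ∑ m ∈ (decompose ℳ x).support, (decompose ℳ x m : M) := by
        refine Finset.sum_congr rfl fun m hm => ?_
        rw [Finset.sum_ite_eq]
        exact if_pos (Finset.mem_image_of_mem _ hm)
    _ = x := sum_support_decompose ℳ x

end StmtAux

theorem stmt_aux
    {R : Type} [CommRing R] {d : ℕ}
    {M : Type} [AddCommGroup M] [Module (MvPolynomial (Fin d) R) M]
    [Module R M]
    [DecidableEq (Fin d →₀ ℕ)]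
    (hsmul : ∀ (r : R) (z : M), (MvPolynomial.C r : MvPolynomial (Fin d) R) • z = r • z)
    (a : Fin d → Rˣ)
    (ℳ : (Fin d →₀ ℕ) → Submodule R M) [DirectSum.Decomposition ℳ]
    (hgr : ∀ (i : Fin d) (m : Fin d →₀ ℕ), ∀ z ∈ ℳ m,
      (MvPolynomial.X i : MvPolynomial (Fin d) R) • z ∈ ℳ (m + Finsupp.single i 1))
    (j : Fin d) (x : M)
    (hx : (MvPolynomial.X j - MvPolynomial.C ((a j : R)) : MvPolynomial (Fin d) R) • x ∈
        (⨆ i : Fin d, ⨆ _ : i < j,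
          LinearMap.range (LinearMap.lsmul (MvPolynomial (Fin d) R) M
            (MvPolynomial.X i - MvPolynomial.C ((a i : R)))))) :
    x ∈ (⨆ i : Fin d, ⨆ _ : i < j,
          LinearMap.range (LinearMap.lsmul (MvPolynomial (Fin d) R) M
            (MvPolynomial.X i - MvPolynomial.C ((a i : R))))) := by
  classical
  set N : Submodule (MvPolynomial (Fin d) R) M :=
    ⨆ i : Fin d, ⨆ _ : i < j,
      LinearMap.range (LinearMap.lsmul (MvPolynomial (Fin d) R) M
        (MvPolynomial.X i - MvPolynomial.C ((a i : R)))) with hN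
  -- extract witnesses
  obtain ⟨f, hf, hsum⟩ := (Submodule.mem_iSup_iff_exists_finsupp _ _).mp hx
  have hY : ∀ i : Fin d, ∃ w : M,
      (MvPolynomial.X i - MvPolynomial.C ((a i : R)) : MvPolynomial (Fin d) R) • w = f i
        ∧ (¬ i < j → w = 0) := by
    intro i
    by_cases h : i < j
    · have hfi := hf i
      rw [iSup_pos h, LinearMap.mem_range] at hfi
      obtain ⟨w, hw⟩ := hfi
      exact ⟨w, hw, fun h' => absurd h h'⟩
    · have hfi := hf i
      rw [iSup_neg h, Submodule.mem_bot] at hfi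
      exact ⟨0, by rw [smul_zero, hfi], fun _ => rfl⟩
  choose y hy1 hy2 using hY
  have hxsum : (MvPolynomial.X j - MvPolynomial.C ((a j : R)) : MvPolynomial (Fin d) R) • x
      = ∑ i : Fin d, (MvPolynomial.X i - MvPolynomial.C ((a i : R)) : MvPolynomial (Fin d) R) • y i := by
    rw [← hsum, Finsupp.sum_fintype _ _ (fun _ => rfl)]
    exact Finset.sum_congr rfl fun i _ => (hy1 i).symm
  -- commutation lemmas
  have hcommC : ∀ (r : R) (n : ℕ) (z : M),
      stmtPi ℳ j n ((MvPolynomial.C r : MvPolynomial (Fin d) R) • z)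
        = (MvPolynomial.C r : MvPolynomial (Fin d) R) • stmtPi ℳ j n z := by
    intro r n z
    have := stmtPi_smul ℳ j (MvPolynomial.C r) 0
      (fun m w hw => by rw [add_zero, hsmul]; exact (ℳ m).smul_mem r hw) n z
    simpa using this
  have hcommX : ∀ (i : Fin d), i ≠ j → ∀ (n : ℕ) (z : M),
      stmtPi ℳ j n ((MvPolynomial.X i : MvPolynomial (Fin d) R) • z)
        = (MvPolynomial.X i : MvPolynomial (Fin d) R) • stmtPi ℳ j n z := by
    intro i hij n z
    have := stmtPi_smul ℳ j (MvPolynomial.X i) (Finsupp.single i 1) (hgr i) n z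
    rw [Finsupp.single_eq_of_ne' hij] at this
    simpa using this
  have hcommXj : ∀ (n : ℕ) (z : M),
      stmtPi ℳ j (n + 1) ((MvPolynomial.X j : MvPolynomial (Fin d) R) • z)
        = (MvPolynomial.X j : MvPolynomial (Fin d) R) • stmtPi ℳ j n z := by
    intro n z
    have := stmtPi_smul ℳ j (MvPolynomial.X j) (Finsupp.single j 1) (hgr j) (n + 1) z
    rw [Finsupp.single_eq_same] at this
    simpa using this
  have hXj0 : ∀ (z : M),
      stmtPi ℳ j 0 ((MvPolynomial.X j : MvPolynomial (Fin d) R) • z) = 0 := by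
    intro z
    have := stmtPi_smul ℳ j (MvPolynomial.X j) (Finsupp.single j 1) (hgr j) 0 z
    rw [Finsupp.single_eq_same] at this
    simpa using this
  have hYcomm : ∀ (i : Fin d), i ≠ j → ∀ (n : ℕ) (z : M),
      stmtPi ℳ j n ((MvPolynomial.X i - MvPolynomial.C ((a i : R)) : MvPolynomial (Fin d) R) • z)
        = (MvPolynomial.X i - MvPolynomial.C ((a i : R)) : MvPolynomial (Fin d) R) • stmtPi ℳ j n z := by
    intro i hij n z
    rw [sub_smul, map_sub, hcommX i hij, hcommC, sub_smul]
  have hmemN : ∀ (n : ℕ) (i : Fin d),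
      stmtPi ℳ j n ((MvPolynomial.X i - MvPolynomial.C ((a i : R)) : MvPolynomial (Fin d) R) • y i) ∈ N := by
    intro n i
    by_cases h : i < j
    · rw [hYcomm i (ne_of_lt h)]
      refine Submodule.mem_iSup_of_mem i (Submodule.mem_iSup_of_mem h ?_)
      exact ⟨stmtPi ℳ j n (y i), rfl⟩
    · rw [hy2 i h, smul_zero, map_zero]
      exact zero_mem N
  have hRHS : ∀ (n : ℕ),
      stmtPi ℳ j n ((MvPolynomial.X j - MvPolynomial.C ((a j : R)) : MvPolynomial (Fin d) R) • x) ∈ N := by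
    intro n
    rw [hxsum, map_sum]
    exact Submodule.sum_mem _ fun i _ => hmemN n i
  have hunit : ∀ z : M, (MvPolynomial.C ((a j : R)) : MvPolynomial (Fin d) R) • z ∈ N → z ∈ N := by
    intro z hz
    have := N.smul_mem (MvPolynomial.C ((((a j)⁻¹ : Rˣ) : R))) hz
    rwa [smul_smul, ← map_mul, Units.inv_mul, map_one, one_smul] at this
  have key : ∀ n : ℕ, stmtPi ℳ j n x ∈ N := by
    intro n
    induction n with
    | zero =>
      have h0 := hRHS 0
      rw [sub_smul, map_sub, hXj0 x, hcommC, zero_sub, neg_mem_iff] at h0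
      exact hunit _ h0
    | succ n ih =>
      have h0 := hRHS (n + 1)
      rw [sub_smul, map_sub, hcommXj, hcommC] at h0
      have h1 : (MvPolynomial.X j : MvPolynomial (Fin d) R) • stmtPi ℳ j n x ∈ N :=
        N.smul_mem _ ih
      have h2 : (MvPolynomial.C ((a j : R)) : MvPolynomial (Fin d) R) • stmtPi ℳ j (n + 1) x ∈ N := by
        have := N.sub_mem h1 h0
        simpa using this
      exact hunit _ h2
  rw [← stmtPi_total ℳ j x]
  exact Submodule.sum_mem _ fun n _ => key n

theorem stmt_3
    (R : Type) [CommRing R] (d : ℕ)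
    (M : Type) [AddCommGroup M] [Module (MvPolynomial (Fin d) R) M]
    (a : Fin d → Rˣ)
    [DecidableEq (Fin d →₀ ℕ)] :
    -- `M` as an `R`-module, by restriction of scalars
    letI : Module R M := Module.compHom M (algebraMap R (MvPolynomial (Fin d) R))
    ∀ (ℳ : (Fin d →₀ ℕ) → Submodule R M),
      -- `M = ⊕_m M_m` is an internal direct sum
      DirectSum.IsInternal ℳ →
      -- the grading is compatible with the standard grading of the polynomial ring
      (∀ (i : Fin d) (m : Fin d →₀ ℕ), ∀ x ∈ ℳ m,
        (MvPolynomial.X i : MvPolynomial (Fin d) R) • x ∈ ℳ (m + Finsupp.single i 1)) →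
      -- the sequence `(Y₁, ..., Y_d)` is regular on `M`
      ∀ (j : Fin d) (x : M),
        (MvPolynomial.X j - MvPolynomial.C ((a j : R)) : MvPolynomial (Fin d) R) • x ∈
            (⨆ i : Fin d, ⨆ _ : i < j,
              LinearMap.range (LinearMap.lsmul (MvPolynomial (Fin d) R) M
                (MvPolynomial.X i - MvPolynomial.C ((a i : R))))) →
        x ∈ (⨆ i : Fin d, ⨆ _ : i < j,
              LinearMap.range (LinearMap.lsmul (MvPolynomial (Fin d) R) M
                (MvPolynomial.X i - MvPolynomial.C ((a i : R))))) := by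
  letI : Module R M := Module.compHom M (algebraMap R (MvPolynomial (Fin d) R))
  intro ℳ hdec hgr j x hx
  letI := hdec.chooseDecomposition
  have hsmul : ∀ (r : R) (z : M), (MvPolynomial.C r : MvPolynomial (Fin d) R) • z = r • z :=
    fun r z => rfl
  exact stmt_aux hsmul a ℳ hgr j x hx
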